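/- Let Ω ⊂ ℝ³ be a bounded open set partitioned (up to the smooth interfaces Γ_p, Γ_c, Γ_e) into open sets Ω_p, Ω_m, Ω_s; let ε equal the positive constants ε_p, ε_m, ε_s on Ω_p, Ω_m, Ω_s respectively; let f ∈ L²(Ω); let χ_s be the indicator function of Ω_s; let B(φ) = β^{-1} Σ_{j=1}^M c_j^∞ (e^{-β q_j φ} − 1) with β > 0, c_j^∞ ≥ 0, q_j ∈ ℝ; let γ : ℝ → ℝ be C¹ with γ and γ′ bounded on bounded sets; let Γ = Γ_c ∪ Γ_e with surface measure dS, and let C, β, q_l be constants with q_l ≠ 0. For φ, ψ ∈ H¹(Ω) ∩ L^∞(Ω) with ∫_Γ γ(φ) dS ≠ 0, define G[Γ; φ] = ∫_Ω ( −(ε/2)|∇φ|² + fφ − χ_s B(φ) ) dX + (C/β) ln( ∫_Γ γ(φ) dS / ∫_Γ dS ). Then t ↦ G[Γ; φ + tψ] is differentiable at t = 0 and (d/dt) G[Γ; φ + tψ]|_{t=0} = ∫_Ω ( −ε ⟨∇φ, ∇ψ⟩ − χ_s B′(φ) ψ + f ψ ) dX + ∫_Γ q_l ρ[Γ] ψ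 dS, where ρ[Γ] = C γ′(φ) / ( β q_l ∫_Γ γ(φ) dS ). -/

import Mathlib

open MeasureTheory
open scoped RealInnerProductSpace

noncomputable section

local notation "E3" => EuclideanSpace ℝ (Fin 3)

lemma abs_add_sub (a b c : ℝ) : |a + b - c| ≤ |a| + |b| + |c| := by
  rw [sub_eq_add_neg]
  exact (abs_add_le _ _).trans (by rw [abs_neg]; linarith [abs_add_le a b])

/-- The derivative of the ionic energy density. -/
def Bd (β : ℝ) {M : ℕ} (c q : Fin M → ℝ) : ℝ → ℝ :=
  fun s => β⁻¹ * ∑ j, c j * (Real.exp (-(β * q j * s)) * -(β * q j))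

lemma hasDerivAt_Bsum (β : ℝ) {M : ℕ} (c q : Fin M → ℝ) (s : ℝ) :
    HasDerivAt (fun u => β⁻¹ * ∑ j, c j * (Real.exp (-(β * q j * u)) - 1)) (Bd β c q s) s := by
  have h : ∀ j ∈ Finset.univ, HasDerivAt
      (fun u : ℝ => c j * (Real.exp (-(β * q j * u)) - 1))
      (c j * (Real.exp (-(β * q j * s)) * -(β * q j))) s := by
    intro j _
    have h1 : HasDerivAt (fun u : ℝ => β * q j * u) (β * q j) s := by
      simpa using (hasDerivAt_id s).const_mul (β * q j)
    exact ((h1.neg.exp).sub_const 1).const_mul (c j)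
  exact (HasDerivAt.fun_sum h).const_mul β⁻¹

lemma Bd_cont (β : ℝ) {M : ℕ} (c q : Fin M → ℝ) : Continuous (Bd β c q) := by
  unfold Bd; fun_prop

lemma exp_aux_le (β : ℝ) (hβ : 0 < β) (a : ℝ) {R s : ℝ} (hs : |s| ≤ R) :
    Real.exp (-(β * a * s)) ≤ Real.exp (β * |a| * R) := by
  apply Real.exp_le_exp.mpr
  calc -(β * a * s) ≤ |β * a * s| := neg_le_abs _
    _ = β * |a| * |s| := by rw [abs_mul, abs_mul, abs_of_pos hβ]
    _ ≤ β * |a| * R := mul_le_mul_of_nonneg_left hs (by positivity)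

lemma Bd_bound {β : ℝ} {M : ℕ} {c : Fin M → ℝ} (q : Fin M → ℝ) (hβ : 0 < β)
    (hc : ∀ j, 0 ≤ c j) {R s : ℝ} (hs : |s| ≤ R) :
    |Bd β c q s| ≤ β⁻¹ * ∑ j, c j * (Real.exp (β * |q j| * R) * (β * |q j|)) := by
  unfold Bd
  rw [abs_mul, abs_of_nonneg (inv_nonneg.mpr hβ.le)]
  refine mul_le_mul_of_nonneg_left ?_ (inv_nonneg.mpr hβ.le)
  refine (Finset.abs_sum_le_sum_abs _ _).trans (Finset.sum_le_sum fun j _ => ?_)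
  rw [abs_mul, abs_of_nonneg (hc j), abs_mul, abs_of_pos (Real.exp_pos _), abs_neg, abs_mul,
    abs_of_pos hβ]
  exact mul_le_mul_of_nonneg_left
    (mul_le_mul_of_nonneg_right (exp_aux_le β hβ (q j) hs) (by positivity)) (hc j)

lemma Bsum_bound {β : ℝ} {M : ℕ} {c : Fin M → ℝ} (q : Fin M → ℝ) (hβ : 0 < β)
    (hc : ∀ j, 0 ≤ c j) {R s : ℝ} (hs : |s| ≤ R) :
    |β⁻¹ * ∑ j, c j * (Real.exp (-(β * q j * s)) - 1)|
      ≤ β⁻¹ * ∑ j, c j * (Real.exp (β * |q j| * R) + 1) := by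
  rw [abs_mul, abs_of_nonneg (inv_nonneg.mpr hβ.le)]
  refine mul_le_mul_of_nonneg_left ?_ (inv_nonneg.mpr hβ.le)
  refine (Finset.abs_sum_le_sum_abs _ _).trans (Finset.sum_le_sum fun j _ => ?_)
  rw [abs_mul, abs_of_nonneg (hc j)]
  refine mul_le_mul_of_nonneg_left ?_ (hc j)
  have h2 := exp_aux_le β hβ (q j) hs
  have h3 := Real.exp_pos (-(β * q j * s))
  have h4 := Real.exp_pos (β * |q j| * R)
  rw [abs_le]
  constructor <;> nlinarith

set_option maxHeartbeats 2000000 in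
theorem stmt9
    -- the domain and its partition by the subdomains and the interfaces
    (Ω Ωp Ωm Ωs Γp Γc Γe : Set E3)
    (hΩopen : IsOpen Ω) (hΩbd : Bornology.IsBounded Ω)
    (hp : IsOpen Ωp) (hm : IsOpen Ωm) (hs : IsOpen Ωs)
    (hpart : Ω = Ωp ∪ Ωm ∪ Ωs ∪ (Γp ∪ Γc ∪ Γe))
    (hd1 : Disjoint Ωp Ωm) (hd2 : Disjoint Ωp Ωs) (hd3 : Disjoint Ωm Ωs)
    (hnull : volume (Γp ∪ Γc ∪ Γe) = 0)
    -- the piecewise constant dielectric coefficient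
    (εp εm εs : ℝ) (hεp : 0 < εp) (hεm : 0 < εm) (hεs : 0 < εs)
    (ε : E3 → ℝ) (hεmeas : Measurable ε)
    (hε1 : ∀ x ∈ Ωp, ε x = εp) (hε2 : ∀ x ∈ Ωm, ε x = εm) (hε3 : ∀ x ∈ Ωs, ε x = εs)
    -- the fixed charge density, in L²(Ω)
    (f : E3 → ℝ) (hf : MemLp f 2 (volume.restrict Ω))
    -- the ionic energy density B
    (β : ℝ) (hβ : 0 < β) (M : ℕ) (c : Fin M → ℝ) (hc : ∀ j, 0 ≤ c j) (q : Fin M → ℝ)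
    (B : ℝ → ℝ)
    (hB : ∀ s : ℝ, B s = β⁻¹ * ∑ j, c j * (Real.exp (-(β * q j * s)) - 1))
    -- the lipid distribution function γ, C¹ with γ, γ′ bounded on bounded sets
    (γ : ℝ → ℝ) (hγ : ContDiff ℝ 1 γ)
    (hγbd : ∀ R : ℝ, ∃ K : ℝ, ∀ x : ℝ, |x| ≤ R → |γ x| ≤ K ∧ |deriv γ x| ≤ K)
    -- the membrane surface Γ = Γc ∪ Γe, with finite surface measure
    (Γ : Set E3) (hΓ : Γ = Γc ∪ Γe) (hΓfin : μH[2] Γ ≠ ⊤)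
    -- the constants
    (C ql : ℝ) (hql : ql ≠ 0)
    -- φ, ψ ∈ H¹(Ω) ∩ L^∞(Ω)
    (φ ψ : E3 → ℝ) (hφ : ContDiff ℝ 1 φ) (hψ : ContDiff ℝ 1 ψ)
    (hφbd : ∃ K, ∀ x, |φ x| ≤ K) (hψbd : ∃ K, ∀ x, |ψ x| ≤ K)
    (hφ2 : MemLp φ 2 (volume.restrict Ω)) (hψ2 : MemLp ψ 2 (volume.restrict Ω))
    (hφH1 : MemLp (fun x => gradient φ x) 2 (volume.restrict Ω))
    (hψH1 : MemLp (fun x => gradient ψ x) 2 (volume.restrict Ω))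
    -- nonvanishing of ∫_Γ γ(φ) dS
    (hΓint : (∫ x in Γ, γ (φ x) ∂μH[2]) ≠ 0) :
    HasDerivAt
      (fun t : ℝ =>
        (∫ x in Ω, (-(ε x) / 2 * ‖gradient (fun y => φ y + t * ψ y) x‖ ^ 2
            + f x * (φ x + t * ψ x)
            - Set.indicator Ωs (fun _ => (1:ℝ)) x * B (φ x + t * ψ x)))
          + C / β * Real.log ((∫ x in Γ, γ (φ x + t * ψ x) ∂μH[2])
              / (∫ x in Γ, (1:ℝ) ∂μH[2])))
      ((∫ x in Ω, (-(ε x) * ⟪gradient φ x, gradient ψ x⟫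
          - Set.indicator Ωs (fun _ => (1:ℝ)) x * deriv B (φ x) * ψ x
          + f x * ψ x))
        + ∫ x in Γ, ql * (C * deriv γ (φ x)
            / (β * ql * ∫ y in Γ, γ (φ y) ∂μH[2])) * ψ x ∂μH[2])
      0 := by
  classical
  obtain ⟨Kφ, hKφ⟩ := hφbd
  obtain ⟨Kψ, hKψ⟩ := hψbd
  have hKφ0 : 0 ≤ Kφ := (abs_nonneg _).trans (hKφ 0)
  have hKψ0 : 0 ≤ Kψ := (abs_nonneg _).trans (hKψ 0)
  set R : ℝ := Kφ + Kψ with hRdef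
  have hR0 : 0 ≤ R := by positivity
  obtain ⟨Kγ, hKγ⟩ := hγbd R
  have hKγ0 : 0 ≤ Kγ := (abs_nonneg _).trans (hKγ 0 (by simpa using hR0)).1
  set Kε : ℝ := max εp (max εm εs) with hKεdef
  have hKε0 : 0 ≤ Kε := hεp.le.trans (le_max_left _ _)
  set KB' : ℝ := β⁻¹ * ∑ j, c j * (Real.exp (β * |q j| * R) * (β * |q j|)) with hKB'def
  set KB : ℝ := β⁻¹ * ∑ j, c j * (Real.exp (β * |q j| * R) + 1) with hKBdef
  -- continuity facts
  have hφc : Continuous φ := hφ.continuous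
  have hψc : Continuous ψ := hψ.continuous
  have hac : Continuous fun x : E3 => gradient φ x :=
    ((InnerProductSpace.toDual ℝ E3).symm.continuous).comp (hφ.continuous_fderiv one_ne_zero)
  have hbc : Continuous fun x : E3 => gradient ψ x :=
    ((InnerProductSpace.toDual ℝ E3).symm.continuous).comp (hψ.continuous_fderiv one_ne_zero)
  have hBc : Continuous B := by
    have hBfun : B = fun s => β⁻¹ * ∑ j, c j * (Real.exp (-(β * q j * s)) - 1) := funext hB
    rw [hBfun]; fun_prop
  have hγc : Continuous γ := hγ.continuous
  have hγ'c : Continuous (deriv γ) := hγ.continuous_deriv le_rfl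
  -- the gradient of φ + tψ
  have hgrad : ∀ (t : ℝ) (x : E3),
      gradient (fun y => φ y + t * ψ y) x = gradient φ x + t • gradient ψ x := by
    intro t x
    have h1 : DifferentiableAt ℝ φ x := hφ.differentiable one_ne_zero x
    have h2 : DifferentiableAt ℝ ψ x := hψ.differentiable one_ne_zero x
    have hfd : fderiv ℝ (fun y => φ y + t * ψ y) x = fderiv ℝ φ x + t • fderiv ℝ ψ x := by
      rw [fderiv_fun_add h1 (h2.const_mul t), fderiv_const_mul h2]
    simp only [gradient, hfd, map_add]
    rw [LinearIsometryEquiv.map_smulₛₗ]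
    simp
  have hnorm : ∀ (t : ℝ) (x : E3),
      ‖gradient φ x + t • gradient ψ x‖ ^ 2
        = ‖gradient φ x‖ ^ 2 + 2 * t * ⟪gradient φ x, gradient ψ x⟫
          + t ^ 2 * ‖gradient ψ x‖ ^ 2 := by
    intro t x
    rw [norm_add_sq_real, real_inner_smul_right, norm_smul]
    simp only [mul_pow, Real.norm_eq_abs, sq_abs]
    ring
  have hBD : ∀ s : ℝ, HasDerivAt B (Bd β c q s) s := by
    intro s
    have hBfun : B = fun s => β⁻¹ * ∑ j, c j * (Real.exp (-(β * q j * s)) - 1) := funext hB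
    rw [hBfun]
    exact hasDerivAt_Bsum β c q s
  -- finiteness of restricted measures
  haveI : IsFiniteMeasure (volume.restrict Ω) :=
    ⟨by rw [Measure.restrict_apply_univ]; exact hΩbd.measure_lt_top⟩
  haveI : IsFiniteMeasure (μH[2].restrict Γ : Measure E3) :=
    ⟨by rw [Measure.restrict_apply_univ]; exact lt_top_iff_ne_top.mpr hΓfin⟩
  -- integrability facts
  have hfint : Integrable f (volume.restrict Ω) := hf.integrable one_le_two
  have hasq : Integrable (fun x => ‖gradient φ x‖ ^ 2) (volume.restrict Ω) :=
    (memLp_two_iff_integrable_sq_norm hac.aestronglyMeasurable).mp hφH1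
  have hbsq : Integrable (fun x => ‖gradient ψ x‖ ^ 2) (volume.restrict Ω) :=
    (memLp_two_iff_integrable_sq_norm hbc.aestronglyMeasurable).mp hψH1
  have hinner : Integrable (fun x => |⟪gradient φ x, gradient ψ x⟫|) (volume.restrict Ω) := by
    refine Integrable.mono' ((hasq.add hbsq).const_mul (1/2)) ?_ ?_
    · exact ((hac.inner hbc).abs).aestronglyMeasurable
    · refine Filter.Eventually.of_forall fun x => ?_
      rw [Real.norm_eq_abs, abs_abs]
      show |⟪gradient φ x, gradient ψ x⟫| ≤ 1/2 * (‖gradient φ x‖ ^ 2 + ‖gradient ψ x‖ ^ 2)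
      have h := abs_real_inner_le_norm (gradient φ x) (gradient ψ x)
      nlinarith [sq_nonneg (‖gradient φ x‖ - ‖gradient ψ x‖), norm_nonneg (gradient φ x),
        norm_nonneg (gradient ψ x)]
  -- a.e. bound on ε
  have hae : ∀ᵐ x ∂volume.restrict Ω, |ε x| ≤ Kε := by
    have h1 : ∀ᵐ x ∂volume.restrict Ω, x ∈ Ω := ae_restrict_mem hΩopen.measurableSet
    have h2 : ∀ᵐ x ∂volume.restrict Ω, x ∉ Γp ∪ Γc ∪ Γe :=
      ae_restrict_of_ae (measure_eq_zero_iff_ae_notMem.mp hnull)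
    filter_upwards [h1, h2] with x hx hx2
    rw [hpart] at hx
    simp only [Set.mem_union] at hx
    rcases hx with ((h | h) | h) | h
    · rw [hε1 x h, abs_of_pos hεp]; exact le_max_left _ _
    · rw [hε2 x h, abs_of_pos hεm]
      exact le_trans (le_max_left _ _) (le_max_right _ _)
    · rw [hε3 x h, abs_of_pos hεs]
      exact le_trans (le_max_right _ _) (le_max_right _ _)
    · exact absurd h hx2
  -- size of φ + tψ
  have hφψ : ∀ (x : E3) (t : ℝ), |t| ≤ 1 → |φ x + t * ψ x| ≤ R := by
    intro x t ht
    have h := abs_add_le (φ x) (t * ψ x)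
    rw [abs_mul] at h
    nlinarith [hKφ x, hKψ x, abs_nonneg (ψ x), abs_nonneg t]
  have hind : ∀ x : E3, |Set.indicator Ωs (fun _ => (1:ℝ)) x| ≤ 1 := by
    intro x; by_cases hx : x ∈ Ωs <;> simp [hx]
  -- measurability of the volume integrand
  have hFmeas : ∀ t : ℝ, AEStronglyMeasurable
      (fun x : E3 => -(ε x) / 2 * ‖gradient φ x + t • gradient ψ x‖ ^ 2
        + f x * (φ x + t * ψ x)
        - Set.indicator Ωs (fun _ => (1:ℝ)) x * B (φ x + t * ψ x)) (volume.restrict Ω) := by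
    intro t
    have h1 : AEStronglyMeasurable (fun x : E3 => -(ε x) / 2) (volume.restrict Ω) :=
      (hεmeas.neg.div_const 2).aestronglyMeasurable
    refine ((h1.mul ?_).add (hf.1.mul ?_)).sub (AEStronglyMeasurable.mul ?_ ?_)
    · exact ((hac.add (hbc.const_smul t)).norm.pow 2).aestronglyMeasurable
    · exact (hφc.add (continuous_const.mul hψc)).aestronglyMeasurable
    · exact (measurable_const.indicator hs.measurableSet).aestronglyMeasurable
    · exact (hBc.comp (hφc.add (continuous_const.mul hψc))).aestronglyMeasurable
  have hF'meas : AEStronglyMeasurable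
      (fun x : E3 => -(ε x) / 2 * (2 * ⟪gradient φ x, gradient ψ x⟫
          + 2 * (0:ℝ) * ‖gradient ψ x‖ ^ 2)
        + f x * ψ x
        - Set.indicator Ωs (fun _ => (1:ℝ)) x * (Bd β c q (φ x + 0 * ψ x) * ψ x))
      (volume.restrict Ω) := by
    have h1 : AEStronglyMeasurable (fun x : E3 => -(ε x) / 2) (volume.restrict Ω) :=
      (hεmeas.neg.div_const 2).aestronglyMeasurable
    refine ((h1.mul ?_).add (hf.1.mul hψc.aestronglyMeasurable)).sub
      (AEStronglyMeasurable.mul ?_ ?_)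
    · exact ((continuous_const.mul (hac.inner hbc)).add
        (continuous_const.mul (hbc.norm.pow 2))).aestronglyMeasurable
    · exact (measurable_const.indicator hs.measurableSet).aestronglyMeasurable
    · exact (((Bd_cont β c q).comp
        (hφc.add (continuous_const.mul hψc))).mul hψc).aestronglyMeasurable
  -- integrability of the volume integrand at t = 0
  have hFint : Integrable
      (fun x : E3 => -(ε x) / 2 * ‖gradient φ x + (0:ℝ) • gradient ψ x‖ ^ 2
        + f x * (φ x + 0 * ψ x)
        - Set.indicator Ωs (fun _ => (1:ℝ)) x * B (φ x + 0 * ψ x)) (volume.restrict Ω) := by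
    have hbound0 : Integrable (fun x : E3 => Kε / 2 * ‖gradient φ x‖ ^ 2 + (|f x| * Kφ + KB))
        (volume.restrict Ω) :=
      ((hasq.const_mul (Kε / 2))).add ((hfint.abs.mul_const Kφ).add (integrable_const _))
    refine Integrable.mono' hbound0 (hFmeas 0) ?_
    filter_upwards [hae] with x hεx
    rw [Real.norm_eq_abs]
    simp only [zero_smul, add_zero, zero_mul]
    have e1 : |(-(ε x) / 2) * ‖gradient φ x‖ ^ 2| ≤ Kε / 2 * ‖gradient φ x‖ ^ 2 := by
      rw [abs_mul, abs_div, abs_neg, abs_two, abs_of_nonneg (sq_nonneg ‖gradient φ x‖)]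
      exact mul_le_mul_of_nonneg_right (by linarith) (sq_nonneg _)
    have e2 : |f x * φ x| ≤ |f x| * Kφ := by
      rw [abs_mul]; exact mul_le_mul_of_nonneg_left (hKφ x) (abs_nonneg _)
    have e3 : |Set.indicator Ωs (fun _ => (1:ℝ)) x * B (φ x)| ≤ KB := by
      rw [abs_mul]
      have hb : |B (φ x)| ≤ KB := by
        rw [hB (φ x), hKBdef]
        exact Bsum_bound q hβ hc ((hKφ x).trans (by rw [hRdef]; linarith))
      calc |Set.indicator Ωs (fun _ => (1:ℝ)) x| * |B (φ x)| ≤ 1 * KB :=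
            mul_le_mul (hind x) hb (abs_nonneg _) one_pos.le
        _ = KB := one_mul _
    exact (abs_add_sub _ _ _).trans (by linarith)
  -- uniform bound for the derivative of the volume integrand
  have hFbound : ∀ᵐ x ∂volume.restrict Ω, ∀ t ∈ Metric.ball (0:ℝ) 1,
      ‖-(ε x) / 2 * (2 * ⟪gradient φ x, gradient ψ x⟫ + 2 * t * ‖gradient ψ x‖ ^ 2)
        + f x * ψ x
        - Set.indicator Ωs (fun _ => (1:ℝ)) x * (Bd β c q (φ x + t * ψ x) * ψ x)‖
      ≤ Kε * (|⟪gradient φ x, gradient ψ x⟫| + ‖gradient ψ x‖ ^ 2) + (|f x| * Kψ + KB' * Kψ) := by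
    filter_upwards [hae] with x hεx
    intro t ht
    have ht1 : |t| ≤ 1 := by
      rw [Metric.mem_ball, Real.dist_eq, sub_zero] at ht; exact ht.le
    rw [Real.norm_eq_abs]
    have e1 : |(-(ε x) / 2) * (2 * ⟪gradient φ x, gradient ψ x⟫ + 2 * t * ‖gradient ψ x‖ ^ 2)|
        ≤ Kε * (|⟪gradient φ x, gradient ψ x⟫| + ‖gradient ψ x‖ ^ 2) := by
      have i1 : |2 * ⟪gradient φ x, gradient ψ x⟫ + 2 * t * ‖gradient ψ x‖ ^ 2|
          ≤ 2 * (|⟪gradient φ x, gradient ψ x⟫| + ‖gradient ψ x‖ ^ 2) := by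
        have h := abs_add_le (2 * ⟪gradient φ x, gradient ψ x⟫) (2 * t * ‖gradient ψ x‖ ^ 2)
        have h2 : |2 * ⟪gradient φ x, gradient ψ x⟫| = 2 * |⟪gradient φ x, gradient ψ x⟫| := by
          rw [abs_mul, abs_two]
        have h3 : |2 * t * ‖gradient ψ x‖ ^ 2| = 2 * |t| * ‖gradient ψ x‖ ^ 2 := by
          rw [abs_mul, abs_mul, abs_two, abs_of_nonneg (sq_nonneg ‖gradient ψ x‖)]
        nlinarith [abs_nonneg (⟪gradient φ x, gradient ψ x⟫), sq_nonneg ‖gradient ψ x‖]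
      calc |(-(ε x) / 2) * (2 * ⟪gradient φ x, gradient ψ x⟫ + 2 * t * ‖gradient ψ x‖ ^ 2)|
          = |ε x| / 2 * |2 * ⟪gradient φ x, gradient ψ x⟫ + 2 * t * ‖gradient ψ x‖ ^ 2| := by
            rw [abs_mul, abs_div, abs_neg, abs_two]
        _ ≤ Kε / 2 * (2 * (|⟪gradient φ x, gradient ψ x⟫| + ‖gradient ψ x‖ ^ 2)) := by
            apply mul_le_mul (by linarith) i1 (abs_nonneg _) (by positivity)
        _ = Kε * (|⟪gradient φ x, gradient ψ x⟫| + ‖gradient ψ x‖ ^ 2) := by ring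
    have e2 : |f x * ψ x| ≤ |f x| * Kψ := by
      rw [abs_mul]; exact mul_le_mul_of_nonneg_left (hKψ x) (abs_nonneg _)
    have e3 : |Set.indicator Ωs (fun _ => (1:ℝ)) x * (Bd β c q (φ x + t * ψ x) * ψ x)|
        ≤ KB' * Kψ := by
      rw [abs_mul, abs_mul]
      have hBdb : |Bd β c q (φ x + t * ψ x)| ≤ KB' := by
        rw [hKB'def]; exact Bd_bound q hβ hc (hφψ x t ht1)
      calc |Set.indicator Ωs (fun _ => (1:ℝ)) x| * (|Bd β c q (φ x + t * ψ x)| * |ψ x|)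
          ≤ 1 * (KB' * Kψ) := by
            refine mul_le_mul (hind x) ?_ (by positivity) one_pos.le
            exact mul_le_mul hBdb (hKψ x) (abs_nonneg _) ((abs_nonneg _).trans hBdb)
        _ = KB' * Kψ := one_mul _
    exact (abs_add_sub _ _ _).trans (by linarith)
  -- differentiability in t of the volume integrand
  have hFdiff : ∀ᵐ x ∂volume.restrict Ω, ∀ t ∈ Metric.ball (0:ℝ) 1,
      HasDerivAt (fun u : ℝ =>
          -(ε x) / 2 * ‖gradient φ x + u • gradient ψ x‖ ^ 2
          + f x * (φ x + u * ψ x)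
          - Set.indicator Ωs (fun _ => (1:ℝ)) x * B (φ x + u * ψ x))
        (-(ε x) / 2 * (2 * ⟪gradient φ x, gradient ψ x⟫ + 2 * t * ‖gradient ψ x‖ ^ 2)
          + f x * ψ x
          - Set.indicator Ωs (fun _ => (1:ℝ)) x * (Bd β c q (φ x + t * ψ x) * ψ x)) t := by
    refine Filter.Eventually.of_forall fun x => ?_
    intro t _
    have haff : HasDerivAt (fun u : ℝ => φ x + u * ψ x) (ψ x) t := by
      simpa using ((hasDerivAt_id t).mul_const (ψ x)).const_add (φ x)
    have hlin : HasDerivAt (fun u : ℝ => 2 * u * ⟪gradient φ x, gradient ψ x⟫)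
        (2 * ⟪gradient φ x, gradient ψ x⟫) t := by
      simpa using ((hasDerivAt_id t).const_mul 2).mul_const ⟪gradient φ x, gradient ψ x⟫
    have hsq : HasDerivAt (fun u : ℝ => u ^ 2 * ‖gradient ψ x‖ ^ 2)
        (2 * t * ‖gradient ψ x‖ ^ 2) t := by
      have := (hasDerivAt_pow 2 t).mul_const (‖gradient ψ x‖ ^ 2)
      simpa [mul_assoc] using this
    have h0 : HasDerivAt (fun u : ℝ => ‖gradient φ x‖ ^ 2
          + 2 * u * ⟪gradient φ x, gradient ψ x⟫ + u ^ 2 * ‖gradient ψ x‖ ^ 2)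
        (2 * ⟪gradient φ x, gradient ψ x⟫ + 2 * t * ‖gradient ψ x‖ ^ 2) t := by
      simpa using ((hasDerivAt_const t (‖gradient φ x‖ ^ 2)).fun_add hlin).fun_add hsq
    have hterm1 : HasDerivAt (fun u : ℝ => -(ε x) / 2 * ‖gradient φ x + u • gradient ψ x‖ ^ 2)
        (-(ε x) / 2 * (2 * ⟪gradient φ x, gradient ψ x⟫ + 2 * t * ‖gradient ψ x‖ ^ 2)) t := by
      refine (h0.const_mul (-(ε x) / 2)).congr_of_eventuallyEq
        (Filter.Eventually.of_forall fun u => ?_)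
      show -(ε x) / 2 * ‖gradient φ x + u • gradient ψ x‖ ^ 2 = _
      rw [hnorm u x]
    have hterm2 : HasDerivAt (fun u : ℝ => f x * (φ x + u * ψ x)) (f x * ψ x) t :=
      haff.const_mul (f x)
    have hterm3 : HasDerivAt
        (fun u : ℝ => Set.indicator Ωs (fun _ => (1:ℝ)) x * B (φ x + u * ψ x))
        (Set.indicator Ωs (fun _ => (1:ℝ)) x * (Bd β c q (φ x + t * ψ x) * ψ x)) t := by
      have := ((hBD (φ x + t * ψ x)).comp t haff).const_mul
        (Set.indicator Ωs (fun _ => (1:ℝ)) x)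
      simpa [Function.comp] using this
    exact (hterm1.add hterm2).sub hterm3
  -- the parametric derivative of the volume integral
  have main1 := hasDerivAt_integral_of_dominated_loc_of_deriv_le
    (F := fun (t : ℝ) (x : E3) => -(ε x) / 2 * ‖gradient φ x + t • gradient ψ x‖ ^ 2
        + f x * (φ x + t * ψ x)
        - Set.indicator Ωs (fun _ => (1:ℝ)) x * B (φ x + t * ψ x))
    (F' := fun (t : ℝ) (x : E3) =>
        -(ε x) / 2 * (2 * ⟪gradient φ x, gradient ψ x⟫ + 2 * t * ‖gradient ψ x‖ ^ 2)
        + f x * ψ x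
        - Set.indicator Ωs (fun _ => (1:ℝ)) x * (Bd β c q (φ x + t * ψ x) * ψ x))
    (μ := volume.restrict Ω) (x₀ := (0:ℝ))
    (bound := fun x => Kε * (|⟪gradient φ x, gradient ψ x⟫| + ‖gradient ψ x‖ ^ 2)
        + (|f x| * Kψ + KB' * Kψ))
    (Metric.ball_mem_nhds (0:ℝ) one_pos) (Filter.Eventually.of_forall hFmeas) hFint hF'meas hFbound
    (((hinner.add hbsq).const_mul Kε).add ((hfint.abs.mul_const Kψ).add (integrable_const _)))
    hFdiff
  have h1 := main1.2
  -- the surface integral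
  have hGmeas : ∀ t : ℝ, AEStronglyMeasurable (fun x : E3 => γ (φ x + t * ψ x))
      (μH[2].restrict Γ) := fun t =>
    (hγc.comp (hφc.add (continuous_const.mul hψc))).aestronglyMeasurable
  have hGint : Integrable (fun x : E3 => γ (φ x + 0 * ψ x)) (μH[2].restrict Γ) := by
    refine Integrable.mono' (integrable_const Kγ) (hGmeas 0)
      (Filter.Eventually.of_forall fun x => ?_)
    rw [Real.norm_eq_abs]
    exact (hKγ _ (by simp only [zero_mul, add_zero]; exact (hKφ x).trans (by rw [hRdef]; linarith))).1
  have hG'meas : AEStronglyMeasurable (fun x : E3 => deriv γ (φ x + 0 * ψ x) * ψ x)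
      (μH[2].restrict Γ) :=
    ((hγ'c.comp (hφc.add (continuous_const.mul hψc))).mul hψc).aestronglyMeasurable
  have hGbound : ∀ᵐ x ∂μH[2].restrict Γ, ∀ t ∈ Metric.ball (0:ℝ) 1,
      ‖deriv γ (φ x + t * ψ x) * ψ x‖ ≤ Kγ * Kψ := by
    refine Filter.Eventually.of_forall fun x => ?_
    intro t ht
    have ht1 : |t| ≤ 1 := by
      rw [Metric.mem_ball, Real.dist_eq, sub_zero] at ht; exact ht.le
    rw [Real.norm_eq_abs, abs_mul]
    exact mul_le_mul (hKγ _ (hφψ x t ht1)).2 (hKψ x) (abs_nonneg _) hKγ0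
  have hGdiff : ∀ᵐ x ∂μH[2].restrict Γ, ∀ t ∈ Metric.ball (0:ℝ) 1,
      HasDerivAt (fun u : ℝ => γ (φ x + u * ψ x)) (deriv γ (φ x + t * ψ x) * ψ x) t := by
    refine Filter.Eventually.of_forall fun x => ?_
    intro t _
    have haff : HasDerivAt (fun u : ℝ => φ x + u * ψ x) (ψ x) t := by
      simpa using ((hasDerivAt_id t).mul_const (ψ x)).const_add (φ x)
    have := ((hγ.differentiable one_ne_zero _).hasDerivAt).comp t haff
    exact this
  have main2 := hasDerivAt_integral_of_dominated_loc_of_deriv_le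
    (F := fun (t : ℝ) (x : E3) => γ (φ x + t * ψ x))
    (F' := fun (t : ℝ) (x : E3) => deriv γ (φ x + t * ψ x) * ψ x)
    (μ := μH[2].restrict Γ) (x₀ := (0:ℝ)) (bound := fun _ => Kγ * Kψ)
    (Metric.ball_mem_nhds (0:ℝ) one_pos) (Filter.Eventually.of_forall hGmeas) hGint hG'meas hGbound (integrable_const _)
    hGdiff
  have h2 := main2.2
  simp only [zero_mul, add_zero] at h2
  -- the log factor
  set S : ℝ := ∫ x in Γ, (1:ℝ) ∂μH[2] with hSdef
  have hμΓ0 : μH[2] Γ ≠ 0 := by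
    intro h0
    exact hΓint (by rw [Measure.restrict_eq_zero.mpr h0, integral_zero_measure])
  have hS : S ≠ 0 := by
    rw [hSdef, setIntegral_const, smul_eq_mul, mul_one]
    exact ENNReal.toReal_ne_zero.mpr ⟨hμΓ0, hΓfin⟩
  have hne : (∫ a in Γ, γ (φ a + 0 * ψ a) ∂μH[2]) / S ≠ 0 :=
    div_ne_zero (by simpa using hΓint) hS
  have hlog := ((h2.div_const S).log hne).const_mul (C / β)
  simp only [zero_mul, add_zero] at hlog
  have total := h1.add hlog
  -- rewrite the function
  have heq : (fun t : ℝ =>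
        (∫ x in Ω, (-(ε x) / 2 * ‖gradient (fun y => φ y + t * ψ y) x‖ ^ 2
            + f x * (φ x + t * ψ x)
            - Set.indicator Ωs (fun _ => (1:ℝ)) x * B (φ x + t * ψ x)))
          + C / β * Real.log ((∫ x in Γ, γ (φ x + t * ψ x) ∂μH[2]) / S))
      = (fun t : ℝ =>
        (∫ x in Ω, (-(ε x) / 2 * ‖gradient φ x + t • gradient ψ x‖ ^ 2
            + f x * (φ x + t * ψ x)
            - Set.indicator Ωs (fun _ => (1:ℝ)) x * B (φ x + t * ψ x)))
          + C / β * Real.log ((∫ x in Γ, γ (φ x + t * ψ x) ∂μH[2]) / S)) := by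
    funext t
    congr 1
    exact integral_congr_ae (Filter.Eventually.of_forall fun x => by simp only [hgrad])
  rw [heq]
  convert total using 1
  · rfl
  · rfl
  · rfl
  congr 1
  · -- the volume part of the derivative
    have hdB : ∀ s, deriv B s = Bd β c q s := fun s => (hBD s).deriv
    refine integral_congr_ae (Filter.Eventually.of_forall fun x => ?_)
    simp only [hdB, mul_zero, zero_mul, add_zero]
    ring
  · -- the surface part of the derivative
    have hI'val : (∫ x in Γ, ql * (C * deriv γ (φ x)
          / (β * ql * ∫ y in Γ, γ (φ y) ∂μH[2])) * ψ x ∂μH[2])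
        = (C / (β * ∫ y in Γ, γ (φ y) ∂μH[2]))
            * ∫ x in Γ, deriv γ (φ x) * ψ x ∂μH[2] := by
      have hpt : ∀ x : E3, ql * (C * deriv γ (φ x)
            / (β * ql * ∫ y in Γ, γ (φ y) ∂μH[2])) * ψ x
          = (C / (β * ∫ y in Γ, γ (φ y) ∂μH[2])) * (deriv γ (φ x) * ψ x) := by
        intro x
        field_simp [hql, hβ.ne', hΓint]
      exact (integral_congr_ae (Filter.Eventually.of_forall hpt)).trans
        (integral_const_mul _ _)
    rw [hI'val]
    have hβ0 : (β : ℝ) ≠ 0 := hβ.ne'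
    field_simp [hS, hΓint]

end
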